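/- arXiv:2309.00788 — 3 statements merged into one kernel-verified Lean document; each statement's English description precedes it below -/
import Mathlib

section
/- For every f in the spectral Barron space ℬ^s(ℝ^d) (i.e., f̂ measurable with ∫(1+|ξ|^s)|f̂(ξ)|dξ < ∞), the Besov norm satisfies ‖f‖_{B^s_{∞,1}} ≤ 2^s ‖f‖_{ℬ^s}, where ‖f‖_{B^s_{∞,1}} = ∑_{j≥0} 2^{sj} ‖(φ_j f̂)^∨‖_{L^∞} for a standard Littlewood–Paley partition of unity {φ_j}. -/
open MeasureTheory FourierTransform ENNReal RealInnerProductSpace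

/-- If a function into `ℂ` is not a.e. strongly measurable, its inverse Fourier
integral vanishes identically. -/
lemma fourierIntegralInv_of_not_aesm {d : ℕ} (f : EuclideanSpace ℝ (Fin d) → ℂ)
    (hf : ¬ AEStronglyMeasurable f (volume : Measure (EuclideanSpace ℝ (Fin d)))) :
    𝓕⁻ f = 0 := by
  funext w
  rw [Real.fourierInv_eq]
  refine integral_undef fun h => hf ?_
  have h1 : AEStronglyMeasurable (fun v => 𝐞 ⟪v, w⟫ • f v)
      (volume : Measure (EuclideanSpace ℝ (Fin d))) := h.aestronglyMeasurable
  have hc : Continuous fun v : EuclideanSpace ℝ (Fin d) => (𝐞 ⟪v, w⟫)⁻¹ :=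
    (Real.continuous_fourierChar.comp (continuous_id.inner continuous_const)).inv
  have h2 : AEStronglyMeasurable
      (fun v => (𝐞 ⟪v, w⟫)⁻¹ • (𝐞 ⟪v, w⟫ • f v))
      (volume : Measure (EuclideanSpace ℝ (Fin d))) :=
    hc.aestronglyMeasurable.smul h1
  simpa [inv_smul_smul] using h2

/-- If `{φ_j}` is a Littlewood–Paley dyadic partition of unity and `f` has Fourier
transform `g` with `∫(1+|ξ|^s)|g| < ∞`, then
`∑_j 2^{sj} ‖(φ_j g)^∨‖_{L^∞} ≤ 2^s ∫(1+|ξ|^s)|g(ξ)| dξ`. -/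
theorem stmt_9 (d : ℕ) (s : ℝ) (hs : 0 ≤ s)
    (g : EuclideanSpace ℝ (Fin d) → ℂ) (hg : Measurable g)
    (hgint : Integrable (fun ξ => (1 + ‖ξ‖ ^ s) * ‖g ξ‖))
    (φ : ℕ → EuclideanSpace ℝ (Fin d) → ℝ)
    (hφ01 : ∀ j ξ, φ j ξ ∈ Set.Icc (0 : ℝ) 1)
    (hφ0 : Function.support (φ 0) ⊆ {ξ | ‖ξ‖ ≤ 2})
    (hφj : ∀ j : ℕ, 1 ≤ j →
      Function.support (φ j) ⊆ {ξ | 2 ^ (j - 1 : ℤ) ≤ ‖ξ‖ ∧ ‖ξ‖ ≤ 2 ^ (j + 1 : ℤ)})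
    (hφsum : ∀ ξ, ∑' j : ℕ, φ j ξ = 1) :
    ∑' j : ℕ, ENNReal.ofReal ((2 : ℝ) ^ (s * j)) *
        eLpNorm (𝓕⁻ (fun ξ => (φ j ξ : ℂ) * g ξ)) ⊤ volume ≤
      ENNReal.ofReal ((2 : ℝ) ^ s * ∫ ξ, (1 + ‖ξ‖ ^ s) * ‖g ξ‖) := by
  classical
  -- the dominating function
  set T : EuclideanSpace ℝ (Fin d) → ℝ := fun ξ => (2 : ℝ) ^ s * ((1 + ‖ξ‖ ^ s) * ‖g ξ‖) with hTdef
  have hT : Integrable T := by rw [hTdef]; exact hgint.const_mul _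
  have hTnn : ∀ ξ, 0 ≤ T ξ := fun ξ =>
    mul_nonneg (Real.rpow_nonneg (by norm_num) _)
      (mul_nonneg (by positivity) (norm_nonneg _))
  -- auxiliary functions
  set u : ℕ → EuclideanSpace ℝ (Fin d) → ℝ := fun j =>
    if AEStronglyMeasurable (fun ξ => (φ j ξ : ℂ) * g ξ) (volume : Measure (EuclideanSpace ℝ (Fin d))) then
      fun ξ => (2 : ℝ) ^ (s * j) * ‖(φ j ξ : ℂ) * g ξ‖
    else 0 with hudef
  have hnorm : ∀ (j : ℕ) ξ, ‖(φ j ξ : ℂ) * g ξ‖ = φ j ξ * ‖g ξ‖ := by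
    intro j ξ
    rw [norm_mul, Complex.norm_real, Real.norm_of_nonneg (hφ01 j ξ).1]
  -- key pointwise inequality
  have key : ∀ (j : ℕ) ξ, (2 : ℝ) ^ (s * j) * ‖(φ j ξ : ℂ) * g ξ‖ ≤ φ j ξ * T ξ := by
    intro j ξ
    rw [hnorm]
    rcases eq_or_ne (φ j ξ) 0 with h0 | h0
    · simp [h0]
    have hmem : ξ ∈ Function.support (φ j) := h0
    have hbound : (2 : ℝ) ^ (s * j) ≤ (2 : ℝ) ^ s * (1 + ‖ξ‖ ^ s) := by
      rcases Nat.eq_zero_or_pos j with hj | hj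
      · subst hj
        simp only [Nat.cast_zero, mul_zero, Real.rpow_zero]
        have h1 : (1 : ℝ) ≤ (2 : ℝ) ^ s := Real.one_le_rpow (by norm_num) hs
        nlinarith [Real.rpow_nonneg (norm_nonneg ξ) s]
      · have hsup := hφj j hj hmem
        have hlow : (2 : ℝ) ^ ((j : ℝ) - 1) ≤ ‖ξ‖ := by
          have h := hsup.1
          rw [← Real.rpow_intCast (2 : ℝ) ((j : ℤ) - 1)] at h
          push_cast at h
          exact h
        have hx : (2 : ℝ) ^ (((j : ℝ) - 1) * s) ≤ ‖ξ‖ ^ s := by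
          rw [Real.rpow_mul (by norm_num)]
          exact Real.rpow_le_rpow (Real.rpow_nonneg (by norm_num) _) hlow hs
        have : (2 : ℝ) ^ (s * j) = (2 : ℝ) ^ s * (2 : ℝ) ^ (((j : ℝ) - 1) * s) := by
          rw [← Real.rpow_add (by norm_num)]
          ring_nf
        rw [this]
        have h2s : (0 : ℝ) ≤ (2 : ℝ) ^ s := Real.rpow_nonneg (by norm_num) _
        nlinarith [Real.rpow_nonneg (norm_nonneg ξ) s]
    calc (2 : ℝ) ^ (s * j) * (φ j ξ * ‖g ξ‖)
        ≤ ((2 : ℝ) ^ s * (1 + ‖ξ‖ ^ s)) * (φ j ξ * ‖g ξ‖) := by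
          apply mul_le_mul_of_nonneg_right hbound
          exact mul_nonneg (hφ01 j ξ).1 (norm_nonneg _)
      _ = φ j ξ * T ξ := by rw [hTdef]; ring
  have hu_nonneg : ∀ (j : ℕ) ξ, 0 ≤ u j ξ := by
    intro j ξ
    by_cases h : AEStronglyMeasurable (fun ξ => (φ j ξ : ℂ) * g ξ) (volume : Measure (EuclideanSpace ℝ (Fin d)))
    · simp only [hudef, if_pos h]
      exact mul_nonneg (Real.rpow_nonneg (by norm_num) _) (norm_nonneg _)
    · simp [hudef, if_neg h]
  have hu_le : ∀ (j : ℕ) ξ, u j ξ ≤ φ j ξ * T ξ := by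
    intro j ξ
    by_cases h : AEStronglyMeasurable (fun ξ => (φ j ξ : ℂ) * g ξ) (volume : Measure (EuclideanSpace ℝ (Fin d)))
    · simp only [hudef, if_pos h]
      exact key j ξ
    · simp only [hudef, if_neg h, Pi.zero_apply]
      exact mul_nonneg (hφ01 j ξ).1 (hTnn ξ)
  have hu_leT : ∀ (j : ℕ) ξ, u j ξ ≤ T ξ := fun j ξ =>
    (hu_le j ξ).trans (mul_le_of_le_one_left (hTnn ξ) (hφ01 j ξ).2)
  have hu_int : ∀ j, Integrable (u j) := by
    intro j
    by_cases h : AEStronglyMeasurable (fun ξ => (φ j ξ : ℂ) * g ξ) (volume : Measure (EuclideanSpace ℝ (Fin d)))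
    · simp only [hudef, if_pos h]
      refine Integrable.mono' hT ((h.norm).const_mul _) ?_
      filter_upwards with ξ
      rw [Real.norm_of_nonneg
        (mul_nonneg (Real.rpow_nonneg (by norm_num) _) (norm_nonneg _))]
      exact (key j ξ).trans (mul_le_of_le_one_left (hTnn ξ) (hφ01 j ξ).2)
    · simp only [hudef, if_neg h]
      exact integrable_zero _ _ _
  -- per-index bound
  have hterm : ∀ (j : ℕ), ENNReal.ofReal ((2 : ℝ) ^ (s * j)) *
      eLpNorm (𝓕⁻ (fun ξ => (φ j ξ : ℂ) * g ξ)) ⊤ volume ≤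
      ENNReal.ofReal (∫ ξ, u j ξ) := by
    intro j
    by_cases h : AEStronglyMeasurable (fun ξ => (φ j ξ : ℂ) * g ξ) (volume : Measure (EuclideanSpace ℝ (Fin d)))
    · have h1 : eLpNorm (𝓕⁻ (fun ξ => (φ j ξ : ℂ) * g ξ)) ⊤ volume ≤
          ENNReal.ofReal (∫ ξ, ‖(φ j ξ : ℂ) * g ξ‖) := by
        rw [eLpNorm_exponent_top]
        refine eLpNormEssSup_le_of_ae_bound ?_
        filter_upwards with w
        exact VectorFourier.norm_fourierIntegral_le_integral_norm _ _ _ _ _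
      calc ENNReal.ofReal ((2 : ℝ) ^ (s * j)) *
            eLpNorm (𝓕⁻ (fun ξ => (φ j ξ : ℂ) * g ξ)) ⊤ volume
          ≤ ENNReal.ofReal ((2 : ℝ) ^ (s * j)) *
            ENNReal.ofReal (∫ ξ, ‖(φ j ξ : ℂ) * g ξ‖) :=
            mul_le_mul_right h1 _
        _ = ENNReal.ofReal ((2 : ℝ) ^ (s * j) * ∫ ξ, ‖(φ j ξ : ℂ) * g ξ‖) :=
            (ENNReal.ofReal_mul (Real.rpow_nonneg (by norm_num) _)).symm
        _ = ENNReal.ofReal (∫ ξ, u j ξ) := by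
            simp only [hudef, if_pos h]
            rw [← integral_const_mul]
    · rw [fourierIntegralInv_of_not_aesm _ h]
      simp only [eLpNorm_zero, mul_zero]
      exact zero_le
  -- sum up
  calc ∑' j : ℕ, ENNReal.ofReal ((2 : ℝ) ^ (s * j)) *
        eLpNorm (𝓕⁻ (fun ξ => (φ j ξ : ℂ) * g ξ)) ⊤ volume
      ≤ ∑' j : ℕ, ENNReal.ofReal (∫ ξ, u j ξ) := ENNReal.tsum_le_tsum hterm
    _ ≤ ENNReal.ofReal ((2 : ℝ) ^ s * ∫ ξ, (1 + ‖ξ‖ ^ s) * ‖g ξ‖) := by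
        rw [ENNReal.tsum_eq_iSup_sum]
        refine iSup_le fun F => ?_
        have h1 : ∑ j ∈ F, ENNReal.ofReal (∫ ξ, u j ξ) =
            ENNReal.ofReal (∑ j ∈ F, ∫ ξ, u j ξ) :=
          (ENNReal.ofReal_sum_of_nonneg fun j _ =>
            integral_nonneg (hu_nonneg j)).symm
        rw [h1, ← integral_finset_sum F fun j _ => hu_int j]
        refine ENNReal.ofReal_le_ofReal ?_
        have hint : (2 : ℝ) ^ s * ∫ ξ, (1 + ‖ξ‖ ^ s) * ‖g ξ‖ = ∫ ξ, T ξ := by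
          rw [hTdef]; exact (integral_const_mul _ _).symm
        rw [hint]
        refine integral_mono (integrable_finset_sum F fun j _ => hu_int j) hT fun ξ => ?_
        have hsummable : Summable fun j => φ j ξ := by
          by_contra hns
          have h2 := hφsum ξ
          rw [tsum_eq_zero_of_not_summable hns] at h2
          exact one_ne_zero h2.symm
        calc ∑ j ∈ F, u j ξ ≤ ∑ j ∈ F, φ j ξ * T ξ :=
              Finset.sum_le_sum fun j _ => hu_le j ξ
          _ = (∑ j ∈ F, φ j ξ) * T ξ := by rw [Finset.sum_mul]
          _ ≤ 1 * T ξ := by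
              refine mul_le_mul_of_nonneg_right ?_ (hTnn ξ)
              rw [← hφsum ξ]
              exact hsummable.sum_le_tsum F (fun j _ => (hφ01 j ξ).1)
          _ = T ξ := one_mul _
end

section
/- Let β(t) = ReLU(2t) - 2ReLU(2t-1) + ReLU(2t-2) (the tent function on [0,1]) and for n ≥ 1 define β_{,n}(t) = ∑_{j=0}^{n-1} β(nt - j) on [0,1]. For any function g: [0,1] → ℝ symmetric about 1/2 (g(1-t)=g(t)), define g_{,n}(t) = g(nt - j) for nt - j ∈ [0,1], j = 0,…,n-1. Then g_{,n₂} ∘ β_{,n₁} = g_{,2n₁n₂} on [0,1]. -/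
/-- `ReLU(t) = max(t,0)`. -/
noncomputable def relu (t : ℝ) : ℝ := max t 0

/-- The tent function `β(t) = ReLU(2t) - 2 ReLU(2t-1) + ReLU(2t-2)`. -/
noncomputable def tent (t : ℝ) : ℝ := relu (2 * t) - 2 * relu (2 * t - 1) + relu (2 * t - 2)

/-- `g_{,n}`, the `n`-fold periodic repetition of `g : [0,1] → ℝ` on `[0,1]`:
`g_{,n}(t) = g(nt - j)` for `nt - j ∈ [0,1]`. -/
noncomputable def per (g : ℝ → ℝ) (n : ℕ) (t : ℝ) : ℝ := g (n * t - ⌊(n : ℝ) * t⌋)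

/-- The sawtooth `β_{,n}(t) = ∑_{j=0}^{n-1} β(nt - j)`. -/
noncomputable def saw (n : ℕ) (t : ℝ) : ℝ := ∑ j ∈ Finset.range n, tent (n * t - j)

lemma tent_nonpos {s : ℝ} (h : s ≤ 0) : tent s = 0 := by
  simp only [tent, relu]
  rw [max_eq_right, max_eq_right, max_eq_right] <;> linarith

lemma tent_ge_one {s : ℝ} (h : 1 ≤ s) : tent s = 0 := by
  simp only [tent, relu]
  rw [max_eq_left, max_eq_left, max_eq_left] <;> linarith

lemma tent_left {s : ℝ} (h0 : 0 ≤ s) (h : s ≤ 1/2) : tent s = 2 * s := by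
  simp only [tent, relu]
  rw [max_eq_left, max_eq_right, max_eq_right] <;> linarith

lemma tent_right {s : ℝ} (h0 : 1/2 ≤ s) (h : s ≤ 1) : tent s = 2 - 2 * s := by
  simp only [tent, relu]
  rw [max_eq_left, max_eq_left, max_eq_right] <;> linarith

lemma saw_eq (n : ℕ) (t : ℝ) (ht0 : 0 ≤ t) (ht1 : t ≤ 1) :
    saw n t = tent (Int.fract ((n : ℝ) * t)) := by
  have hnt0 : (0 : ℝ) ≤ (n : ℝ) * t := by positivity
  have hntn : (n : ℝ) * t ≤ n := by
    nlinarith [Nat.cast_nonneg (α := ℝ) n]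
  have hm0 : 0 ≤ ⌊(n : ℝ) * t⌋ := Int.floor_nonneg.2 hnt0
  have hmn : ⌊(n : ℝ) * t⌋ ≤ n := by
    have := Int.floor_le_floor (R := ℝ) hntn
    simpa using this
  rcases eq_or_lt_of_le hmn with he | hl
  · -- floor = n, so nt = n, fract = 0
    have hge : (n : ℝ) ≤ (n : ℝ) * t := by
      have := Int.floor_le ((n : ℝ) * t)
      rw [he] at this; exact_mod_cast this
    have hnt : (n : ℝ) * t = n := le_antisymm hntn hge
    rw [Int.fract, hnt, Int.floor_natCast]
    push_cast
    rw [sub_self, tent_nonpos le_rfl]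
    refine Finset.sum_eq_zero fun j hj => ?_
    rw [hnt]
    apply tent_ge_one
    have := Finset.mem_range.1 hj
    have : (j : ℝ) ≤ (n : ℝ) - 1 := by
      have : (j : ℝ) + 1 ≤ n := by exact_mod_cast this
      linarith
    linarith
  · set m := ⌊(n : ℝ) * t⌋ with hm
    have hmem : m.toNat ∈ Finset.range n := by
      rw [Finset.mem_range]
      omega
    rw [saw, Finset.sum_eq_single_of_mem m.toNat hmem]
    · rw [Int.fract]
      congr 2
      have : (m.toNat : ℤ) = m := Int.toNat_of_nonneg hm0
      exact_mod_cast this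
    · intro j hj hne
      have hfl := Int.floor_le ((n : ℝ) * t)
      have hfu := Int.lt_floor_add_one ((n : ℝ) * t)
      rcases lt_or_gt_of_ne hne with h | h
      · apply tent_ge_one
        have : (j : ℝ) + 1 ≤ m := by
          have : (j : ℤ) + 1 ≤ m := by omega
          exact_mod_cast this
        linarith
      · apply tent_nonpos
        have : (m : ℝ) + 1 ≤ j := by
          have : m + 1 ≤ (j : ℤ) := by omega
          exact_mod_cast this
        linarith

/-- If `g` is symmetric about `1/2` then `g_{,n₂} ∘ β_{,n₁} = g_{,2n₁n₂}` on `[0,1]`. -/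
theorem stmt_14 (g : ℝ → ℝ) (hg : ∀ t ∈ Set.Icc (0 : ℝ) 1, g (1 - t) = g t)
    (n₁ n₂ : ℕ) (hn₁ : 1 ≤ n₁) (hn₂ : 1 ≤ n₂) :
    ∀ t ∈ Set.Icc (0 : ℝ) 1, per g n₂ (saw n₁ t) = per g (2 * n₁ * n₂) t := by
  intro t ht
  obtain ⟨ht0, ht1⟩ := ht
  rw [saw_eq n₁ t ht0 ht1]
  set u := Int.fract ((n₁ : ℝ) * t) with hu
  have hu0 : 0 ≤ u := Int.fract_nonneg _
  have hu1 : u < 1 := Int.fract_lt_one _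
  -- RHS argument
  have hR : ((2 * n₁ * n₂ : ℕ) : ℝ) * t - ⌊((2 * n₁ * n₂ : ℕ) : ℝ) * t⌋ =
      Int.fract ((2 * n₂ : ℝ) * u) := by
    have h1 : ((2 * n₁ * n₂ : ℕ) : ℝ) * t =
        (2 * n₂ : ℝ) * u + ((2 * n₂ * ⌊(n₁ : ℝ) * t⌋ : ℤ) : ℝ) := by
      rw [hu, Int.fract]
      push_cast
      ring
    rw [← Int.fract, h1, Int.fract_add_intCast]
  simp only [per]
  rw [hR]
  rcases le_or_gt u (1/2) with h | h
  · rw [tent_left hu0 h, Int.self_sub_floor]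
    congr 2
    ring
  · rw [tent_right (le_of_lt h) (le_of_lt hu1)]
    have harg : (n₂ : ℝ) * (2 - 2 * u) = -((2 * n₂ : ℝ) * u) + ((2 * n₂ : ℤ) : ℝ) := by
      push_cast; ring
    rw [Int.self_sub_floor, harg, Int.fract_add_intCast]
    by_cases hz : Int.fract ((2 * n₂ : ℝ) * u) = 0
    · rw [Int.fract_neg_eq_zero.2 hz, hz]
    · rw [Int.fract_neg hz]
      exact hg _ ⟨Int.fract_nonneg _, (Int.fract_lt_one _).le⟩
end

section
/- Let n, R > 0 and f(x) = cos(2πn x₁) e^{-π|x|²/R} on ℝ^d. Then the Fourier transform is f̂(ξ) = R^{d/2} e^{-πR(|ξ|²+n²)} cosh(2πnRξ₁), which is positive, and ∫_{ℝ^d} f̂(ξ) dξ = 1, while ∫_{ℝ^d} |ξ|₁ f̂(ξ) dξ ≤ n + d/(π√R), where |ξ|₁ denotes the ℓ¹ norm. -/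
open MeasureTheory FourierTransform Real

noncomputable section Stmt17Aux
open RealInnerProductSpace
local notation "cexp" => Complex.exp

section OneDA

lemma stmt17_euclid_integrable_prod {d : ℕ} (f : Fin d → ℝ → ℝ) (hf : ∀ i, Integrable (f i)) :
    Integrable (fun ξ : EuclideanSpace ℝ (Fin d) => ∏ i, f i (ξ i)) := by
  have e := (EuclideanSpace.volume_preserving_symm_measurableEquiv_toLp (Fin d)).symm
  rw [← e.integrable_comp_emb (MeasurableEquiv.measurableEmbedding _)]
  exact Integrable.fintype_prod (f := fun i (t : ℝ) => f i t) hf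

lemma stmt17_euclid_integral_prod {d : ℕ} (f : Fin d → ℝ → ℝ) :
    ∫ ξ : EuclideanSpace ℝ (Fin d), ∏ i, f i (ξ i) = ∏ i, ∫ t : ℝ, f i t := by
  have e := (EuclideanSpace.volume_preserving_symm_measurableEquiv_toLp (Fin d)).symm
  rw [← e.integral_comp (MeasurableEquiv.measurableEmbedding _)]
  exact integral_fintype_prod_eq_prod (f := fun i (t : ℝ) => f i t)

lemma stmt17_ioi_int {b : ℝ} (hb : 0 < b) :
    ∫ x in Set.Ioi (0:ℝ), x * rexp (-b * x ^ 2) = (2*b)⁻¹ := by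
  have hderiv : ∀ x ∈ Set.Ici (0:ℝ),
      HasDerivAt (fun x : ℝ => -(2*b)⁻¹ * rexp (-b * x ^ 2)) (x * rexp (-b * x ^ 2)) x := by
    intro x _
    have h1 : HasDerivAt (fun x : ℝ => -b * x ^ 2) (-b * (2 * x)) x := by
      simpa using ((hasDerivAt_pow 2 x).const_mul (-b))
    have := (h1.exp).const_mul (-(2*b)⁻¹)
    refine this.congr_deriv ?_
    field_simp
  have hint : IntegrableOn (fun x : ℝ => x * rexp (-b * x ^ 2)) (Set.Ioi 0) :=
    (integrable_mul_exp_neg_mul_sq hb).integrableOn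
  have htend : Filter.Tendsto (fun x : ℝ => -(2*b)⁻¹ * rexp (-b * x ^ 2))
      Filter.atTop (nhds 0) := by
    rw [show (0:ℝ) = -(2*b)⁻¹ * 0 by ring]
    refine Filter.Tendsto.const_mul _ ?_
    refine Real.tendsto_exp_atBot.comp ?_
    have : Filter.Tendsto (fun x : ℝ => b * x ^ 2) Filter.atTop Filter.atTop :=
      (Filter.tendsto_pow_atTop (by norm_num)).const_mul_atTop hb
    have h2 := Filter.tendsto_neg_atTop_atBot.comp this
    simpa [Function.comp_def, neg_mul] using h2
  have := integral_Ioi_of_hasDerivAt_of_tendsto' hderiv hint htend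
  rw [this]; norm_num

lemma stmt17_abs_int {b : ℝ} (hb : 0 < b) :
    ∫ x : ℝ, |x| * rexp (-b * x ^ 2) = b⁻¹ := by
  have : ∀ x : ℝ, |x| * rexp (-b * x ^ 2) = (fun t => t * rexp (-b * t ^ 2)) |x| := by
    intro x; simp [sq_abs]
  calc ∫ x : ℝ, |x| * rexp (-b * x ^ 2) = ∫ x : ℝ, (fun t => t * rexp (-b * t ^ 2)) |x| :=
        integral_congr_ae (Filter.Eventually.of_forall this)
    _ = 2 * ∫ x in Set.Ioi (0:ℝ), x * rexp (-b * x ^ 2) := integral_comp_abs (f := fun t => t * rexp (-b * t ^ 2))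
    _ = b⁻¹ := by rw [stmt17_ioi_int hb]; field_simp

lemma stmt17_abs_integrable {b : ℝ} (hb : 0 < b) :
    Integrable (fun x : ℝ => |x| * rexp (-b * x ^ 2)) := by
  have := (integrable_mul_exp_neg_mul_sq hb).abs
  refine this.congr ?_
  filter_upwards with x
  rw [abs_mul, abs_of_pos (exp_pos _)]

lemma stmt17_DUMMY_unused {b : ℝ} (hb : 0 < b) :
    Integrable (fun x : ℝ => |x| * rexp (-b * x ^ 2)) := by
  have := (integrable_mul_exp_neg_mul_sq hb).abs
  refine this.congr ?_
  filter_upwards with x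
  rw [abs_mul, abs_of_pos (exp_pos _)]

variable {R : ℝ} (hR : 0 < R)
include hR

lemma stmt17_gauss1d_integrable (c : ℝ) :
    Integrable (fun t : ℝ => Real.sqrt R * rexp (-(π*R) * (t - c)^2)) := by
  have ha : 0 < π * R := by positivity
  exact ((integrable_exp_neg_mul_sq ha).const_mul (Real.sqrt R)).comp_sub_right c

lemma stmt17_gauss1d_integral (c : ℝ) :
    ∫ t : ℝ, Real.sqrt R * rexp (-(π*R) * (t - c)^2) = 1 := by
  have ha : 0 < π * R := by positivity
  rw [integral_sub_right_eq_self (fun t : ℝ => Real.sqrt R * rexp (-(π*R) * t^2)) c,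
    integral_const_mul _ _, integral_gaussian]
  rw [show π / (π * R) = R⁻¹ by field_simp, Real.sqrt_inv]
  have : Real.sqrt R ≠ 0 := ne_of_gt (Real.sqrt_pos.mpr hR)
  field_simp

lemma stmt17_gauss1d_abs_integrable (c : ℝ) :
    Integrable (fun t : ℝ => |t| * (Real.sqrt R * rexp (-(π*R) * (t - c)^2))) := by
  have ha : 0 < π * R := by positivity
  have hmaj : Integrable (fun t : ℝ =>
      |c| * (Real.sqrt R * rexp (-(π*R) * t^2)) + Real.sqrt R * (|t| * rexp (-(π*R) * t^2))) :=
    (((integrable_exp_neg_mul_sq ha).const_mul (Real.sqrt R)).const_mul |c|).add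
      ((stmt17_abs_integrable ha).const_mul (Real.sqrt R))
  have hF : Integrable (fun t : ℝ => |t + c| * (Real.sqrt R * rexp (-(π*R) * t^2))) := by
    refine hmaj.mono' ?_ ?_
    · exact ((continuous_abs.comp (continuous_id.add continuous_const)).mul
        (continuous_const.mul ((continuous_const.mul (continuous_pow 2)).rexp))).aestronglyMeasurable
    · filter_upwards with t
      have h1 : |t + c| ≤ |c| + |t| := by
        calc |t + c| ≤ |t| + |c| := abs_add_le t c
        _ = |c| + |t| := by ring
      have h2 : (0:ℝ) < Real.sqrt R * rexp (-(π*R) * t^2) := by positivity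
      rw [Real.norm_eq_abs, abs_of_nonneg (by positivity)]
      calc |t + c| * (Real.sqrt R * rexp (-(π*R) * t^2))
          ≤ (|c| + |t|) * (Real.sqrt R * rexp (-(π*R) * t^2)) :=
            mul_le_mul_of_nonneg_right h1 h2.le
        _ = _ := by ring
  have := hF.comp_sub_right c
  refine this.congr ?_
  filter_upwards with t
  simp

lemma stmt17_gauss1d_abs_integral (c : ℝ) :
    ∫ t : ℝ, |t| * (Real.sqrt R * rexp (-(π*R) * (t - c)^2))
      ≤ |c| + 1 / (π * Real.sqrt R) := by
  have ha : 0 < π * R := by positivity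
  have hs : (0:ℝ) < Real.sqrt R := Real.sqrt_pos.mpr hR
  have key : (fun t : ℝ => |t| * (Real.sqrt R * rexp (-(π*R) * (t - c)^2)))
      = fun t => (fun u : ℝ => |u + c| * (Real.sqrt R * rexp (-(π*R) * u^2))) (t - c) := by
    funext t; simp
  rw [key, integral_sub_right_eq_self (fun u : ℝ => |u + c| * (Real.sqrt R * rexp (-(π*R) * u^2))) c]
  have hF : Integrable (fun t : ℝ => |t + c| * (Real.sqrt R * rexp (-(π*R) * t^2))) := by
    have := (stmt17_gauss1d_abs_integrable hR c).comp_add_right c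
    refine this.congr ?_
    filter_upwards with t
    simp
  have hmaj : Integrable (fun t : ℝ =>
      |c| * (Real.sqrt R * rexp (-(π*R) * t^2)) + Real.sqrt R * (|t| * rexp (-(π*R) * t^2))) :=
    (((integrable_exp_neg_mul_sq ha).const_mul (Real.sqrt R)).const_mul |c|).add
      ((stmt17_abs_integrable ha).const_mul (Real.sqrt R))
  calc ∫ t : ℝ, |t + c| * (Real.sqrt R * rexp (-(π*R) * t^2))
      ≤ ∫ t : ℝ, |c| * (Real.sqrt R * rexp (-(π*R) * t^2))
          + Real.sqrt R * (|t| * rexp (-(π*R) * t^2)) := by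
        refine integral_mono hF hmaj fun t => ?_
        have h1 : |t + c| ≤ |c| + |t| := by
          calc |t + c| ≤ |t| + |c| := abs_add_le t c
          _ = |c| + |t| := by ring
        have h2 : (0:ℝ) < Real.sqrt R * rexp (-(π*R) * t^2) := by positivity
        calc |t + c| * (Real.sqrt R * rexp (-(π*R) * t^2))
            ≤ (|c| + |t|) * (Real.sqrt R * rexp (-(π*R) * t^2)) :=
              mul_le_mul_of_nonneg_right h1 h2.le
          _ = _ := by ring
    _ = |c| + 1 / (π * Real.sqrt R) := by
        rw [integral_add ((((integrable_exp_neg_mul_sq ha).const_mul (Real.sqrt R)).const_mul |c|))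
          ((stmt17_abs_integrable ha).const_mul (Real.sqrt R)), integral_const_mul _ _, integral_const_mul _ _]
        have h0 : ∫ a : ℝ, rexp (-(π*R) * a^2) = (Real.sqrt R)⁻¹ := by
          rw [integral_gaussian, show π / (π * R) = R⁻¹ by field_simp, Real.sqrt_inv]
        have h3 : ∫ t : ℝ, |t| * rexp (-(π*R) * t^2) = (π*R)⁻¹ := stmt17_abs_int ha
        rw [integral_const_mul _ _, h0, h3]
        have hss : Real.sqrt R * Real.sqrt R = R := Real.mul_self_sqrt hR.le
        have : Real.sqrt R ≠ 0 := ne_of_gt hs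
        field_simp
        nlinarith [hss, pi_pos]


end OneDA
section Euclid
variable {d : ℕ} {R : ℝ} (hR : 0 < R)
include hR

lemma stmt17_pointwise_id (hd : 0 < d) (n : ℝ) (ξ : EuclideanSpace ℝ (Fin d)) :
    R ^ ((d : ℝ) / 2) * rexp (-π * R * (‖ξ‖ ^ 2 + n ^ 2)) *
        Real.cosh (2 * π * n * R * ξ ⟨0, hd⟩)
      = ((∏ j, (Real.sqrt R * rexp (-(π*R) * (ξ j - (if j = ⟨0,hd⟩ then n else 0))^2)))
        + ∏ j, (Real.sqrt R * rexp (-(π*R) * (ξ j - (if j = ⟨0,hd⟩ then -n else 0))^2))) / 2 := by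
  set i0 : Fin d := ⟨0, hd⟩
  have hnorm : ‖ξ‖^2 = ∑ j, (ξ j)^2 := by
    rw [EuclideanSpace.norm_eq, Real.sq_sqrt (by positivity)]
    simp [Real.norm_eq_abs, sq_abs]
  have hpow : Real.sqrt R ^ d = R ^ ((d:ℝ)/2) := by
    rw [Real.sqrt_eq_rpow, ← Real.rpow_natCast (R ^ ((1:ℝ)/2)) d, ← Real.rpow_mul hR.le]
    norm_num
    rw [mul_comm, mul_one_div]
  have hsum : ∀ c : ℝ, ∑ j, (ξ j - (if j = i0 then c else 0))^2
      = (∑ j, (ξ j)^2) - 2*c*ξ i0 + c^2 := by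
    intro c
    have h : ∀ j, (ξ j - (if j = i0 then c else 0))^2
        = (ξ j)^2 - (if j = i0 then 2*c*ξ j else 0) + (if j = i0 then c^2 else 0) := by
      intro j; by_cases h : j = i0 <;> simp [h] <;> ring
    simp_rw [h, Finset.sum_add_distrib, Finset.sum_sub_distrib,
      Finset.sum_ite_eq' Finset.univ i0, Finset.mem_univ, if_true]
  have hprodc : ∀ c : ℝ, (∏ j, (Real.sqrt R * rexp (-(π*R) * (ξ j - (if j = i0 then c else 0))^2)))
      = R ^ ((d:ℝ)/2) * rexp (-(π*R) * ((∑ j, (ξ j)^2) - 2*c*ξ i0 + c^2)) := by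
    intro c
    rw [Finset.prod_mul_distrib, Finset.prod_const, Finset.card_univ, Fintype.card_fin, hpow,
      ← Real.exp_sum, ← Finset.mul_sum, hsum]
  rw [hprodc n, hprodc (-n), Real.cosh_eq, hnorm]
  rw [show -(π*R) * ((∑ j, (ξ j)^2) - 2*n*ξ i0 + n^2)
      = (-π*R*((∑ j, (ξ j)^2) + n^2)) + (2*π*n*R*ξ i0) by ring]
  rw [show -(π*R) * ((∑ j, (ξ j)^2) - 2*(-n)*ξ i0 + (-n)^2)
      = (-π*R*((∑ j, (ξ j)^2) + n^2)) + -(2*π*n*R*ξ i0) by ring]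
  rw [Real.exp_add, Real.exp_add]
  ring

lemma stmt17_gaussE_integrable (w : Fin d → ℝ) :
    Integrable (fun ξ : EuclideanSpace ℝ (Fin d) =>
      ∏ j, (Real.sqrt R * rexp (-(π*R) * (ξ j - w j)^2))) :=
  stmt17_euclid_integrable_prod _ (fun j => stmt17_gauss1d_integrable hR (w j))

lemma stmt17_gaussE_integral (w : Fin d → ℝ) :
    ∫ ξ : EuclideanSpace ℝ (Fin d),
      ∏ j, (Real.sqrt R * rexp (-(π*R) * (ξ j - w j)^2)) = 1 := by
  rw [stmt17_euclid_integral_prod (fun j t => Real.sqrt R * rexp (-(π*R) * (t - w j)^2))]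
  have h : ∀ j ∈ Finset.univ, (∫ t : ℝ, Real.sqrt R * rexp (-(π*R) * (t - w j)^2)) = 1 :=
    fun j _ => stmt17_gauss1d_integral hR (w j)
  rw [Finset.prod_congr rfl h, Finset.prod_const_one]

lemma stmt17_absE_integrable (w : Fin d → ℝ) (i : Fin d) :
    Integrable (fun ξ : EuclideanSpace ℝ (Fin d) =>
      ∏ j, ((if j = i then |ξ j| else 1) * (Real.sqrt R * rexp (-(π*R) * (ξ j - w j)^2)))) := by
  refine stmt17_euclid_integrable_prod
    (fun j t => (if j = i then |t| else 1) * (Real.sqrt R * rexp (-(π*R) * (t - w j)^2)))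
    (fun j => ?_)
  by_cases h : j = i
  · simpa [h] using stmt17_gauss1d_abs_integrable hR (w j)
  · simpa [h] using stmt17_gauss1d_integrable hR (w j)

lemma stmt17_absE_integral_le (w : Fin d → ℝ) (i : Fin d) :
    ∫ ξ : EuclideanSpace ℝ (Fin d),
      ∏ j, ((if j = i then |ξ j| else 1) * (Real.sqrt R * rexp (-(π*R) * (ξ j - w j)^2)))
      ≤ |w i| + 1 / (π * Real.sqrt R) := by
  rw [stmt17_euclid_integral_prod
    (fun j t => (if j = i then |t| else 1) * (Real.sqrt R * rexp (-(π*R) * (t - w j)^2)))]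
  have hcong : ∀ j ∈ Finset.univ, (∫ t : ℝ,
      (if j = i then |t| else 1) * (Real.sqrt R * rexp (-(π*R) * (t - w j)^2)))
      = if j = i then (∫ t : ℝ, |t| * (Real.sqrt R * rexp (-(π*R) * (t - w j)^2))) else 1 := by
    intro j _
    by_cases h : j = i
    · simp [h]
    · simp only [h, if_false, one_mul]
      exact stmt17_gauss1d_integral hR (w j)
  rw [Finset.prod_congr rfl hcong, Finset.prod_ite_eq' Finset.univ i, if_pos (Finset.mem_univ i)]
  exact stmt17_gauss1d_abs_integral hR (w i)

lemma stmt17_part3 (hd : 0 < d) (n : ℝ) :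
    ∫ ξ : EuclideanSpace ℝ (Fin d),
        R ^ ((d : ℝ) / 2) * Real.exp (-π * R * (‖ξ‖ ^ 2 + n ^ 2)) *
          Real.cosh (2 * π * n * R * ξ ⟨0, hd⟩) = 1 := by
  simp_rw [stmt17_pointwise_id hR hd n]
  rw [integral_div, integral_add (stmt17_gaussE_integrable hR _) (stmt17_gaussE_integrable hR _),
    stmt17_gaussE_integral hR, stmt17_gaussE_integral hR]
  norm_num

lemma stmt17_part4 (hd : 0 < d) {n : ℝ} (hn : 0 < n) :
    ∫ ξ : EuclideanSpace ℝ (Fin d),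
        (∑ i, |ξ i|) * (R ^ ((d : ℝ) / 2) * Real.exp (-π * R * (‖ξ‖ ^ 2 + n ^ 2)) *
          Real.cosh (2 * π * n * R * ξ ⟨0, hd⟩)) ≤ n + d / (π * Real.sqrt R) := by
  set i0 : Fin d := ⟨0, hd⟩ with hi0
  have hFw : ∀ (w : Fin d → ℝ) (ξ : EuclideanSpace ℝ (Fin d)),
      (∑ i, |ξ i|) * (∏ j, (Real.sqrt R * rexp (-(π*R) * (ξ j - w j)^2)))
      = ∑ i, ∏ j, ((if j = i then |ξ j| else 1)
          * (Real.sqrt R * rexp (-(π*R) * (ξ j - w j)^2))) := by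
    intro w ξ
    rw [Finset.sum_mul]
    refine Finset.sum_congr rfl fun i _ => ?_
    symm
    rw [Finset.prod_mul_distrib, Finset.prod_ite_eq' Finset.univ i (fun j => |ξ j|),
      if_pos (Finset.mem_univ i)]
  have hpt : ∀ ξ : EuclideanSpace ℝ (Fin d),
      (∑ i, |ξ i|) * (R ^ ((d : ℝ) / 2) * Real.exp (-π * R * (‖ξ‖ ^ 2 + n ^ 2)) *
          Real.cosh (2 * π * n * R * ξ i0))
      = ((∑ i, ∏ j, ((if j = i then |ξ j| else 1)
            * (Real.sqrt R * rexp (-(π*R) * (ξ j - (if j = i0 then n else 0))^2))))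
        + ∑ i, ∏ j, ((if j = i then |ξ j| else 1)
            * (Real.sqrt R * rexp (-(π*R) * (ξ j - (if j = i0 then -n else 0))^2)))) / 2 := by
    intro ξ
    rw [stmt17_pointwise_id hR hd n ξ, mul_div_assoc', mul_add, hFw, hFw]
  simp_rw [hpt]
  have hintsum : ∀ w : Fin d → ℝ, Integrable (fun ξ : EuclideanSpace ℝ (Fin d) =>
      ∑ i, ∏ j, ((if j = i then |ξ j| else 1)
        * (Real.sqrt R * rexp (-(π*R) * (ξ j - w j)^2)))) := by
    intro w
    exact integrable_finset_sum _ (fun i _ => stmt17_absE_integrable hR w i)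
  have hbound : ∀ w : Fin d → ℝ, (∑ i, |w i|) = n →
      ∫ ξ : EuclideanSpace ℝ (Fin d), ∑ i, ∏ j, ((if j = i then |ξ j| else 1)
        * (Real.sqrt R * rexp (-(π*R) * (ξ j - w j)^2)))
      ≤ n + d / (π * Real.sqrt R) := by
    intro w hw
    rw [integral_finset_sum _ (fun i _ => stmt17_absE_integrable hR w i)]
    calc ∑ i, ∫ ξ : EuclideanSpace ℝ (Fin d), ∏ j, ((if j = i then |ξ j| else 1)
          * (Real.sqrt R * rexp (-(π*R) * (ξ j - w j)^2)))
        ≤ ∑ i, (|w i| + 1 / (π * Real.sqrt R)) :=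
          Finset.sum_le_sum (fun i _ => stmt17_absE_integral_le hR w i)
      _ = n + d / (π * Real.sqrt R) := by
          rw [Finset.sum_add_distrib, Finset.sum_const, Finset.card_univ, Fintype.card_fin, hw,
            nsmul_eq_mul, mul_one_div]
  have hw1 : (∑ i, |(if i = i0 then n else 0 : ℝ)|) = n := by
    simp [apply_ite abs, Finset.sum_ite_eq', abs_of_pos hn]
  have hw2 : (∑ i, |(if i = i0 then -n else 0 : ℝ)|) = n := by
    simp [apply_ite abs, Finset.sum_ite_eq', abs_of_pos hn]
  rw [integral_div, integral_add (hintsum _) (hintsum _)]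
  have h1 := hbound _ hw1
  have h2 := hbound _ hw2
  linarith

end Euclid

section PartOne

lemma stmt17_part1 {d : ℕ} (hd : 0 < d) {n R : ℝ} (hn : 0 < n) (hR : 0 < R)
    (ξ : EuclideanSpace ℝ (Fin d)) :
    𝓕 (fun x : EuclideanSpace ℝ (Fin d) =>
        ((Real.cos (2 * π * n * x ⟨0, hd⟩) * Real.exp (-π * ‖x‖ ^ 2 / R) : ℝ) : ℂ)) ξ =
      ((R ^ ((d : ℝ) / 2) * Real.exp (-π * R * (‖ξ‖ ^ 2 + n ^ 2)) *
          Real.cosh (2 * π * n * R * ξ ⟨0, hd⟩) : ℝ) : ℂ) := by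
  set i0 : Fin d := ⟨0, hd⟩
  set b : ℂ := ((π / R : ℝ) : ℂ) with hb_def
  have hb : 0 < b.re := by simp [hb_def]; positivity
  set w0 : EuclideanSpace ℝ (Fin d) := EuclideanSpace.single i0 n with hw0
  have hπ : (π : ℝ) ≠ 0 := ne_of_gt pi_pos
  set gp : EuclideanSpace ℝ (Fin d) → ℂ := fun v => cexp (-b * ‖v‖ ^ 2 + 2 * ↑π * Complex.I * ((inner ℝ w0 v : ℝ) : ℂ)) with hgp
  set gm : EuclideanSpace ℝ (Fin d) → ℂ := fun v => cexp (-b * ‖v‖ ^ 2 + 2 * ↑π * Complex.I * ((inner ℝ (-w0) v : ℝ) : ℂ)) with hgm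
  have hinner : ∀ v : EuclideanSpace ℝ (Fin d), (inner ℝ w0 v : ℝ) = n * v i0 := by
    intro v
    rw [hw0, EuclideanSpace.inner_single_left]
    simp
  have hsplit : (fun x : EuclideanSpace ℝ (Fin d) =>
      ((Real.cos (2 * π * n * x i0) * Real.exp (-π * ‖x‖ ^ 2 / R) : ℝ) : ℂ))
      = (1/2 : ℂ) • (gp + gm) := by
    funext v
    simp only [Pi.smul_apply, Pi.add_apply, hgp, hgm, smul_eq_mul]
    rw [inner_neg_left, hinner v]
    push_cast
    set θ : ℂ := 2 * ↑π * ↑n * ↑(v i0) with hθ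
    have hc : -b * (‖v‖:ℂ)^2 = -↑π * (‖v‖:ℂ)^2 / ↑R := by
      rw [hb_def]; push_cast; ring
    have e1 : -b * (‖v‖:ℂ)^2 + 2*↑π*Complex.I*((n:ℂ)*↑(v i0))
        = -b*(‖v‖:ℂ)^2 + θ*Complex.I := by rw [hθ]; ring
    have e2 : -b * (‖v‖:ℂ)^2 + 2*↑π*Complex.I*-((n:ℂ)*↑(v i0))
        = -b*(‖v‖:ℂ)^2 + -θ*Complex.I := by rw [hθ]; ring
    rw [e1, e2, Complex.exp_add, Complex.exp_add, ← mul_add, ← Complex.two_cos, hc]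
    ring
  rw [hsplit]
  have hintp : Integrable gp := GaussianFourier.integrable_cexp_neg_mul_sq_norm_add hb _ w0
  have hintm : Integrable gm := GaussianFourier.integrable_cexp_neg_mul_sq_norm_add hb _ (-w0)
  have hFT : 𝓕 ((1/2 : ℂ) • (gp + gm)) ξ = (1/2 : ℂ) * (𝓕 gp ξ + 𝓕 gm ξ) := by
    show VectorFourier.fourierIntegral 𝐞 volume (innerₗ (EuclideanSpace ℝ (Fin d))) ((1/2 : ℂ) • (gp + gm)) ξ = _
    rw [VectorFourier.fourierIntegral_const_smul,
      VectorFourier.fourierIntegral_add Real.continuous_fourierChar continuous_inner hintp hintm]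
    simp [smul_eq_mul]
    rfl
  rw [hFT]
  rw [show 𝓕 gp ξ = (↑π / b) ^ (Module.finrank ℝ (EuclideanSpace ℝ (Fin d)) / 2 : ℂ) * cexp (-↑π ^ 2 * ‖w0 - ξ‖ ^ 2 / b)
      from fourier_gaussian_innerProductSpace' hb w0 ξ]
  rw [show 𝓕 gm ξ = (↑π / b) ^ (Module.finrank ℝ (EuclideanSpace ℝ (Fin d)) / 2 : ℂ) * cexp (-↑π ^ 2 * ‖-w0 - ξ‖ ^ 2 / b)
      from fourier_gaussian_innerProductSpace' hb (-w0) ξ]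
  have hfr : (Module.finrank ℝ (EuclideanSpace ℝ (Fin d)) : ℂ) = (d : ℂ) := by
    norm_cast
    exact finrank_euclideanSpace_fin
  have hπc : (↑π : ℂ) ≠ 0 := Complex.ofReal_ne_zero.mpr hπ
  have hπb : (↑π : ℂ) / b = (R : ℂ) := by
    rw [hb_def]
    push_cast
    rw [div_div_eq_mul_div, mul_comm, mul_div_assoc, div_self hπc, mul_one]
  have hpow : ((↑π : ℂ) / b) ^ (Module.finrank ℝ (EuclideanSpace ℝ (Fin d)) / 2 : ℂ) = ((R ^ ((d : ℝ)/2) : ℝ) : ℂ) := by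
    rw [hπb, Complex.ofReal_cpow hR.le]
    push_cast [hfr]
    norm_num
  have hexp : ∀ u : EuclideanSpace ℝ (Fin d), -(↑π : ℂ) ^ 2 * (‖u‖:ℂ) ^ 2 / b = ((-π * R * ‖u‖^2 : ℝ) : ℂ) := by
    intro u
    rw [hb_def]
    push_cast
    field_simp [hπc]
  rw [hpow, hexp (w0 - ξ), hexp (-w0 - ξ), ← Complex.ofReal_exp, ← Complex.ofReal_exp]
  have hreal : R ^ ((d : ℝ)/2) * Real.exp (-π * R * (‖ξ‖ ^ 2 + n ^ 2)) *
      Real.cosh (2 * π * n * R * ξ i0)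
      = 1/2 * (R ^ ((d : ℝ)/2) * (Real.exp (-π * R * ‖w0 - ξ‖^2))
        + R ^ ((d : ℝ)/2) * (Real.exp (-π * R * ‖-w0 - ξ‖^2))) := by
    have h1 : ‖w0 - ξ‖^2 = ‖ξ‖^2 + n^2 - 2 * n * ξ i0 := by
      rw [norm_sub_sq_real, hinner ξ, hw0, EuclideanSpace.norm_single]
      rw [Real.norm_eq_abs, sq_abs]
      ring
    have h2 : ‖-w0 - ξ‖^2 = ‖ξ‖^2 + n^2 + 2 * n * ξ i0 := by
      rw [show -w0 - ξ = -(w0 + ξ) by abel, norm_neg, norm_add_sq_real, hinner ξ, hw0,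
        EuclideanSpace.norm_single, Real.norm_eq_abs, sq_abs]
      ring
    rw [h1, h2, Real.cosh_eq]
    rw [show -π * R * (‖ξ‖^2 + n^2 - 2*n*ξ i0) = -π*R*(‖ξ‖^2+n^2) + 2*π*n*R*ξ i0 by ring]
    rw [show -π * R * (‖ξ‖^2 + n^2 + 2*n*ξ i0) = -π*R*(‖ξ‖^2+n^2) + -(2*π*n*R*ξ i0) by ring]
    rw [Real.exp_add, Real.exp_add]
    ring
  rw [show ((R ^ ((d : ℝ)/2) * Real.exp (-π * R * (‖ξ‖ ^ 2 + n ^ 2)) *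
      Real.cosh (2 * π * n * R * ξ i0) : ℝ) : ℂ) = ((1/2 * (R ^ ((d : ℝ)/2) *
      (Real.exp (-π * R * ‖w0 - ξ‖^2)) + R ^ ((d : ℝ)/2) *
      (Real.exp (-π * R * ‖-w0 - ξ‖^2))) : ℝ) : ℂ) from congrArg _ hreal]
  push_cast
  ring

end PartOne
end Stmt17Aux

/-- For `f(x) = cos(2πn x₁) e^{-π|x|²/R}`, the Fourier transform is the positive function
`f̂(ξ) = R^{d/2} e^{-πR(|ξ|²+n²)} cosh(2πnRξ₁)`, with `∫ f̂ = 1` and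
`∫ |ξ|₁ f̂(ξ) dξ ≤ n + d/(π√R)`. -/
theorem stmt_17 (d : ℕ) (hd : 0 < d) (n R : ℝ) (hn : 0 < n) (hR : 0 < R) :
    (∀ ξ : EuclideanSpace ℝ (Fin d),
      𝓕 (fun x : EuclideanSpace ℝ (Fin d) =>
          ((Real.cos (2 * π * n * x ⟨0, hd⟩) * Real.exp (-π * ‖x‖ ^ 2 / R) : ℝ) : ℂ)) ξ =
        ((R ^ ((d : ℝ) / 2) * Real.exp (-π * R * (‖ξ‖ ^ 2 + n ^ 2)) *
            Real.cosh (2 * π * n * R * ξ ⟨0, hd⟩) : ℝ) : ℂ)) ∧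
    (∀ ξ : EuclideanSpace ℝ (Fin d),
      0 < R ^ ((d : ℝ) / 2) * Real.exp (-π * R * (‖ξ‖ ^ 2 + n ^ 2)) *
          Real.cosh (2 * π * n * R * ξ ⟨0, hd⟩)) ∧
    (∫ ξ : EuclideanSpace ℝ (Fin d),
        R ^ ((d : ℝ) / 2) * Real.exp (-π * R * (‖ξ‖ ^ 2 + n ^ 2)) *
          Real.cosh (2 * π * n * R * ξ ⟨0, hd⟩) = 1) ∧
    (∫ ξ : EuclideanSpace ℝ (Fin d),
        (∑ i, |ξ i|) * (R ^ ((d : ℝ) / 2) * Real.exp (-π * R * (‖ξ‖ ^ 2 + n ^ 2)) *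
          Real.cosh (2 * π * n * R * ξ ⟨0, hd⟩)) ≤ n + d / (π * Real.sqrt R)) := by
  refine ⟨fun ξ => stmt17_part1 hd hn hR ξ, fun ξ => ?_, stmt17_part3 hR hd n, stmt17_part4 hR hd hn⟩
  exact mul_pos (mul_pos (Real.rpow_pos_of_pos hR _) (Real.exp_pos _)) (Real.cosh_pos _)
end
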